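/- Let X be a nonempty compact topological space, let t > 0 and λ ≤ 0, and let φ, F : X → ℝ and r : X → ℝ be continuous functions with r(x) > 0 for all x, satisfying the pointwise identity φ(x)/t = log r(x) + λ·φ(x) + F(x) for all x ∈ X. Assume that log r(x₀) ≤ 0 at every point x₀ at which φ attains its global maximum over X, and log r(x₀) ≥ 0 at every point x₀ at which φ attains its global minimum over X. Then exp(-2·sup_X |F|) ≤ r(x) ≤ exp(2·sup_X |F|) for all x ∈ X. -/

import Mathlib

/-- First step of the C² estimate (Lemma 6.1): the C⁰ bound on the potential
is equivalent to a two-sided volume-form bound `C⁻¹ ≤ ωⁿ/ω̂ⁿ ≤ C`. -/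
theorem stmt_9 (X : Type*) [TopologicalSpace X] [CompactSpace X] [Nonempty X]
    (t lam : ℝ) (ht : 0 < t) (hlam : lam ≤ 0)
    (φ F r : X → ℝ)
    (hφ : Continuous φ) (hF : Continuous F) (hr : Continuous r)
    (hr0 : ∀ x, 0 < r x)
    (heq : ∀ x, φ x / t = Real.log (r x) + lam * φ x + F x)
    (hmax : ∀ x₀, (∀ x, φ x ≤ φ x₀) → Real.log (r x₀) ≤ 0)
    (hmin : ∀ x₀, (∀ x, φ x₀ ≤ φ x) → 0 ≤ Real.log (r x₀)) :
    ∀ x, Real.exp (-2 * ⨆ y, |F y|) ≤ r x ∧ r x ≤ Real.exp (2 * ⨆ y, |F y|) := by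
  set M : ℝ := ⨆ y, |F y| with hM
  have hbdd : BddAbove (Set.range fun y => |F y|) :=
    (isCompact_range (hF.abs)).bddAbove
  have hFle : ∀ x, |F x| ≤ M := fun x => le_ciSup hbdd x
  set c : ℝ := 1 / t - lam with hc
  have hcpos : 0 < c := by
    have : 0 < 1 / t := by positivity
    dsimp [c]; linarith
  have hlog : ∀ x, Real.log (r x) = c * φ x - F x := by
    intro x
    have := heq x
    field_simp [c] at this ⊢
    rw [hc]; linarith [heq x, show φ x * (1 / t - lam) = φ x / t - φ x * lam by ring]
  -- maximum point
  obtain ⟨x₁, -, hx₁⟩ := isCompact_univ.exists_isMaxOn Set.univ_nonempty hφ.continuousOn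
  obtain ⟨x₂, -, hx₂⟩ := isCompact_univ.exists_isMinOn Set.univ_nonempty hφ.continuousOn
  have hx₁' : ∀ x, φ x ≤ φ x₁ := fun x => hx₁ (Set.mem_univ x)
  have hx₂' : ∀ x, φ x₂ ≤ φ x := fun x => hx₂ (Set.mem_univ x)
  have h1 : Real.log (r x₁) ≤ 0 := hmax x₁ hx₁'
  have h2 : 0 ≤ Real.log (r x₂) := hmin x₂ hx₂'
  have hφub : ∀ x, c * φ x ≤ M := by
    intro x
    have := hlog x₁
    have hF1 : F x₁ ≤ M := (abs_le.mp (hFle x₁)).2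
    have : c * φ x₁ ≤ M := by nlinarith
    have := mul_le_mul_of_nonneg_left (hx₁' x) hcpos.le
    linarith
  have hφlb : ∀ x, -M ≤ c * φ x := by
    intro x
    have := hlog x₂
    have hF2 : -M ≤ F x₂ := (abs_le.mp (hFle x₂)).1
    have : -M ≤ c * φ x₂ := by nlinarith
    have := mul_le_mul_of_nonneg_left (hx₂' x) hcpos.le
    linarith
  intro x
  have hFb := abs_le.mp (hFle x)
  have hub : Real.log (r x) ≤ 2 * M := by
    rw [hlog x]; linarith [hφub x, hFb.1]
  have hlb : -2 * M ≤ Real.log (r x) := by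
    rw [hlog x]; linarith [hφlb x, hFb.2]
  constructor
  · calc Real.exp (-2 * M) ≤ Real.exp (Real.log (r x)) := Real.exp_le_exp.mpr hlb
      _ = r x := Real.exp_log (hr0 x)
  · calc r x = Real.exp (Real.log (r x)) := (Real.exp_log (hr0 x)).symm
      _ ≤ Real.exp (2 * M) := Real.exp_le_exp.mpr hub
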